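/- If H = SK_n with n ≥ 4 is a convex subgraph of a two-dimensional partial cube G ∈ F(Q_3) and H is not contained in a larger full subdivision of a complete graph inside G, then H is a gated subgraph of G: every vertex x of G has a (unique) gate x' in H such that d(x,y) = d(x,x') + d(x',y) for every vertex y of H. -/

import Mathlib

open Finset

/-- The hypercube graph on subsets of `Fin m`. -/
def cubeGraph (m : ℕ) : SimpleGraph (Finset (Fin m)) where
  Adj A B := (symmDiff A B).card = 1
  symm := ⟨fun A B h => by show (symmDiff B A : Finset (Fin m)).card = 1; rwa [symmDiff_comm]⟩
  loopless := ⟨fun A h => by change (symmDiff A A : Finset (Fin m)).card = 1 at h; simp only [symmDiff_self, bot_eq_empty, card_empty] at h; exact absurd h (by norm_num)⟩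

/-- `V` is (the vertex set of) a partial cube isometrically embedded in `Q_m`:
the distance in the induced subgraph equals the Hamming distance. -/
def IsPC {m : ℕ} (V : Set (Finset (Fin m))) : Prop :=
  ∀ u v : V, ((cubeGraph m).induce V).dist u v = (symmDiff u.1 v.1).card

def Shatters {m : ℕ} (V : Set (Finset (Fin m))) (Y : Finset (Fin m)) : Prop :=
  ∀ Z ⊆ Y, ∃ B ∈ V, B ∩ Y = Z

def VCdimLE {m : ℕ} (V : Set (Finset (Fin m))) (d : ℕ) : Prop :=
  ∀ Y : Finset (Fin m), Shatters V Y → Y.card ≤ d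

inductive PCStep {m : ℕ} : Set (Finset (Fin m)) → Set (Finset (Fin m)) → Prop
  | contract (i : Fin m) (V : Set (Finset (Fin m))) :
      PCStep V ((fun B => B.erase i) '' V)
  | restrictPos (i : Fin m) (V : Set (Finset (Fin m))) :
      PCStep V {B ∈ V | i ∈ B}
  | restrictNeg (i : Fin m) (V : Set (Finset (Fin m))) :
      PCStep V {B ∈ V | i ∉ B}

/-- Partial-cube minor relation: a sequence of contractions and restrictions. -/
def PCMinor {m : ℕ} : Set (Finset (Fin m)) → Set (Finset (Fin m)) → Prop :=
  Relation.ReflTransGen PCStep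

/-- `W` is (the vertex set of) a `k`-dimensional subcube of `Q_m`. -/
def IsCubeFam {m : ℕ} (k : ℕ) (W : Set (Finset (Fin m))) : Prop :=
  ∃ (Y X : Finset (Fin m)), Disjoint Y X ∧ X.card = k ∧
    W = {B | ∃ Z ⊆ X, B = Y ∪ Z}

/-- `G` has the cube `Q_k` as a pc-minor. -/
def HasQMinor {m : ℕ} (V : Set (Finset (Fin m))) (k : ℕ) : Prop :=
  ∃ W, PCMinor V W ∧ IsCubeFam k W

def hdist {m : ℕ} (A B : Finset (Fin m)) : ℕ := (symmDiff A B).card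

def IsConvexIn {m : ℕ} (V S : Set (Finset (Fin m))) : Prop :=
  S ⊆ V ∧ ∀ u ∈ S, ∀ v ∈ S, ∀ x ∈ V, hdist u x + hdist x v = hdist u v → x ∈ S

def convexHullIn {m : ℕ} (V S : Set (Finset (Fin m))) : Set (Finset (Fin m)) :=
  ⋂₀ {T | S ⊆ T ∧ IsConvexIn V T}

def IsGatedIn {m : ℕ} (V S : Set (Finset (Fin m))) : Prop :=
  S ⊆ V ∧ ∀ x ∈ V, ∃ g ∈ S, ∀ y ∈ S, hdist x g + hdist g y = hdist x y

/-- The standardly embedded full subdivision `SK_n` in `Q_n`: singletons and pairs. -/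
def SKset (n : ℕ) : Set (Finset (Fin n)) := {B | B.card = 1 ∨ B.card = 2}

/-- A standardly embedded copy of `SK_n` in `Q_m` along the injection `ι`. -/
def skCopy {m : ℕ} (n : ℕ) (ι : Fin n → Fin m) : Set (Finset (Fin m)) :=
  (fun B => B.image ι) '' SKset n


lemma hdist_comm {m : ℕ} (A B : Finset (Fin m)) : hdist A B = hdist B A := by
  unfold hdist; rw [symmDiff_comm]

lemma hdist_eq_zero_iff {m : ℕ} {A B : Finset (Fin m)} : hdist A B = 0 ↔ A = B := by
  unfold hdist
  rw [Finset.card_eq_zero, ← Finset.bot_eq_empty, symmDiff_eq_bot]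

lemma symmDiff_subset_union_symmDiff {m : ℕ} (A B C : Finset (Fin m)) :
    symmDiff A C ⊆ symmDiff A B ∪ symmDiff B C := by
  intro t ht
  simp only [Finset.mem_symmDiff, Finset.mem_union] at *
  tauto

lemma hdist_triangle {m : ℕ} (A B C : Finset (Fin m)) :
    hdist A C ≤ hdist A B + hdist B C := by
  calc (symmDiff A C).card ≤ (symmDiff A B ∪ symmDiff B C).card :=
        Finset.card_le_card (symmDiff_subset_union_symmDiff A B C)
    _ ≤ _ := Finset.card_union_le _ _

lemma between_hdist {m : ℕ} {A B C : Finset (Fin m)} (h1 : A ∩ C ⊆ B) (h2 : B ⊆ A ∪ C) :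
    hdist A B + hdist B C = hdist A C := by
  have hdisj : symmDiff A B ∩ symmDiff B C = ∅ := by
    ext t
    simp only [Finset.mem_inter, Finset.mem_symmDiff, Finset.notMem_empty, iff_false]
    intro ⟨h3, h4⟩
    have := @h1 t
    have := @h2 t
    simp only [Finset.mem_inter, Finset.mem_union] at *
    tauto
  have huni : symmDiff A B ∪ symmDiff B C = symmDiff A C := by
    ext t
    have := @h1 t
    have := @h2 t
    simp only [Finset.mem_union, Finset.mem_symmDiff, Finset.mem_inter, Finset.mem_union] at *
    tauto
  unfold hdist
  rw [← Finset.card_union_of_disjoint (Finset.disjoint_iff_inter_eq_empty.mpr hdisj), huni]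

lemma between_of_hdist {m : ℕ} {A B C : Finset (Fin m)}
    (h : hdist A B + hdist B C = hdist A C) : A ∩ C ⊆ B ∧ B ⊆ A ∪ C := by
  have hsub := symmDiff_subset_union_symmDiff A B C
  have hcard : (symmDiff A B ∪ symmDiff B C).card + (symmDiff A B ∩ symmDiff B C).card
      = hdist A B + hdist B C := Finset.card_union_add_card_inter _ _
  have hle : hdist A C ≤ (symmDiff A B ∪ symmDiff B C).card := Finset.card_le_card hsub
  have hint : (symmDiff A B ∩ symmDiff B C).card = 0 := by omega
  rw [Finset.card_eq_zero] at hint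
  constructor
  · intro t ht
    by_contra htB
    have : t ∈ symmDiff A B ∩ symmDiff B C := by
      simp only [Finset.mem_inter, Finset.mem_symmDiff]
      simp only [Finset.mem_inter] at ht
      tauto
    rw [hint] at this; exact absurd this (Finset.notMem_empty t)
  · intro t ht
    by_contra htAC
    have : t ∈ symmDiff A B ∩ symmDiff B C := by
      simp only [Finset.mem_inter, Finset.mem_symmDiff]
      simp only [Finset.mem_union] at htAC
      push_neg at htAC
      tauto
    rw [hint] at this; exact absurd this (Finset.notMem_empty t)

lemma pc_step {m : ℕ} {V : Set (Finset (Fin m))} (hV : IsPC V) (u v : V) (hne : u ≠ v) :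
    ∃ w : V, hdist u.1 w.1 = 1 ∧ hdist w.1 v.1 + 1 = hdist u.1 v.1 := by
  set G := (cubeGraph m).induce V with hG
  have hduv : G.dist u v = hdist u.1 v.1 := hV u v
  have hne0 : G.dist u v ≠ 0 := by
    rw [hduv]
    intro h0
    exact hne (Subtype.ext (hdist_eq_zero_iff.mp h0))
  obtain ⟨p, hp⟩ := SimpleGraph.exists_walk_of_dist_ne_zero hne0
  cases p with
  | nil => rw [SimpleGraph.Walk.length_nil] at hp; exact absurd hp.symm hne0
  | @cons _ w _ hadj q =>
    refine ⟨w, ?_, ?_⟩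
    · have : (cubeGraph m).Adj u.1 w.1 := hadj
      exact this
    · rw [SimpleGraph.Walk.length_cons] at hp
      have h1 : G.dist w v ≤ q.length := SimpleGraph.dist_le q
      have h2 : hdist w.1 v.1 ≤ q.length := by
        have h5 := hV w v
        rw [← hG] at h5
        unfold hdist; omega
      have h3 : hdist u.1 v.1 ≤ hdist u.1 w.1 + hdist w.1 v.1 := hdist_triangle _ _ _
      have h4 : hdist u.1 w.1 = 1 := hadj
      unfold hdist at *
      omega

lemma mem_skCopy_iff {m n : ℕ} {iota : Fin n → Fin m} (hiota : Function.Injective iota)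
    {s : Finset (Fin m)} :
    s ∈ skCopy n iota ↔ s ⊆ Finset.univ.image iota ∧ (s.card = 1 ∨ s.card = 2) := by
  constructor
  · rintro ⟨B, hB, rfl⟩
    refine ⟨Finset.image_subset_image (Finset.subset_univ B), ?_⟩
    rw [Finset.card_image_of_injective B hiota]
    exact hB
  · rintro ⟨hsub, hcard⟩
    refine ⟨Finset.univ.filter (fun a => iota a ∈ s), ?_, ?_⟩
    · have himg : (Finset.univ.filter (fun a => iota a ∈ s)).image iota = s := by
        ext t
        simp only [Finset.mem_image, Finset.mem_filter, Finset.mem_univ, true_and]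
        constructor
        · rintro ⟨a, has, rfl⟩; exact has
        · intro hts
          obtain ⟨a, -, rfl⟩ := Finset.mem_image.mp (hsub hts)
          exact ⟨a, hts, rfl⟩
      show _ = 1 ∨ _ = 2
      rw [← Finset.card_image_of_injective _ hiota, himg]
      exact hcard
    · ext t
      simp only [Finset.mem_image, Finset.mem_filter, Finset.mem_univ, true_and]
      constructor
      · rintro ⟨a, has, rfl⟩; exact has
      · intro hts
        obtain ⟨a, -, rfl⟩ := Finset.mem_image.mp (hsub hts)
        exact ⟨a, hts, rfl⟩

lemma singleton_mem_skCopy {m n : ℕ} {iota : Fin n → Fin m} (hiota : Function.Injective iota)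
    (i : Fin n) : ({iota i} : Finset (Fin m)) ∈ skCopy n iota := by
  rw [mem_skCopy_iff hiota]
  exact ⟨Finset.singleton_subset_iff.mpr (Finset.mem_image_of_mem _ (Finset.mem_univ i)),
    Or.inl (Finset.card_singleton _)⟩

lemma pair_mem_skCopy {m n : ℕ} {iota : Fin n → Fin m} (hiota : Function.Injective iota)
    {i j : Fin n} (hij : i ≠ j) : ({iota i, iota j} : Finset (Fin m)) ∈ skCopy n iota := by
  rw [mem_skCopy_iff hiota]
  refine ⟨?_, Or.inr (Finset.card_pair (fun h => hij (hiota h)))⟩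
  intro t ht
  rcases Finset.mem_insert.mp ht with rfl | ht
  · exact Finset.mem_image_of_mem _ (Finset.mem_univ i)
  · rw [Finset.mem_singleton.mp ht]
    exact Finset.mem_image_of_mem _ (Finset.mem_univ j)

lemma hdist_empty {m : ℕ} (A : Finset (Fin m)) : hdist A ∅ = A.card := by
  unfold hdist
  rw [← Finset.bot_eq_empty, symmDiff_bot]

lemma hdist_union_singleton {m : ℕ} {S : Finset (Fin m)} {c : Fin m} (hc : c ∉ S) :
    hdist (S ∪ {c}) {c} = S.card := by
  unfold hdist
  congr 1
  ext t
  simp only [Finset.mem_symmDiff, Finset.mem_union, Finset.mem_singleton]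
  constructor
  · rintro (⟨h1 | h1, h2⟩ | ⟨h1, h2⟩)
    · exact h1
    · exact absurd h1 h2
    · subst h1; tauto
  · intro ht
    have : t ≠ c := fun h => hc (h ▸ ht)
    tauto

lemma hdist_singletons {m : ℕ} {a b : Fin m} (h : a ≠ b) :
    hdist ({a} : Finset (Fin m)) {b} = 2 := by
  unfold hdist
  have : symmDiff ({a} : Finset (Fin m)) {b} = {a, b} := by
    ext t
    simp only [Finset.mem_symmDiff, Finset.mem_singleton, Finset.mem_insert]
    constructor
    · tauto
    · rintro (rfl | rfl)
      · exact Or.inl ⟨rfl, h⟩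
      · exact Or.inr ⟨rfl, fun hh => h hh.symm⟩
  rw [this, Finset.card_pair h]

lemma hdist_add_singleton {m : ℕ} {x : Finset (Fin m)} {c : Fin m} (hc : c ∉ x) :
    hdist x ({c} : Finset (Fin m)) = x.card + 1 := by
  unfold hdist
  have : symmDiff x ({c} : Finset (Fin m)) = insert c x := by
    ext t
    simp only [Finset.mem_symmDiff, Finset.mem_singleton, Finset.mem_insert]
    constructor
    · tauto
    · rintro (rfl | ht)
      · exact Or.inr ⟨rfl, hc⟩
      · have : t ≠ c := fun h => hc (h ▸ ht)
        tauto
  rw [this, Finset.card_insert_of_notMem hc, Nat.add_comm]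

lemma shatters_of_triple {m : ℕ} {V : Set (Finset (Fin m))} {a b c : Fin m}
    (hab : a ≠ b) (hac : a ≠ c) (hbc : b ≠ c)
    {w0 w1 w2 w3 w4 w5 w6 w7 : Finset (Fin m)}
    (m0 : w0 ∈ V) (m1 : w1 ∈ V) (m2 : w2 ∈ V) (m3 : w3 ∈ V)
    (m4 : w4 ∈ V) (m5 : w5 ∈ V) (m6 : w6 ∈ V) (m7 : w7 ∈ V)
    (e0 : w0 ∩ {a, b, c} = ∅) (e1 : w1 ∩ {a, b, c} = {a}) (e2 : w2 ∩ {a, b, c} = {b})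
    (e3 : w3 ∩ {a, b, c} = {c}) (e4 : w4 ∩ {a, b, c} = {a, b}) (e5 : w5 ∩ {a, b, c} = {a, c})
    (e6 : w6 ∩ {a, b, c} = {b, c}) (e7 : w7 ∩ {a, b, c} = {a, b, c}) :
    Shatters V {a, b, c} := by
  intro Z hZ
  have hmem : ∀ t ∈ Z, t = a ∨ t = b ∨ t = c := by
    intro t ht
    have := hZ ht
    simpa using this
  by_cases ha : a ∈ Z <;> by_cases hb : b ∈ Z <;> by_cases hc : c ∈ Z
  · refine ⟨w7, m7, e7.trans ?_⟩
    ext t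
    simp only [Finset.mem_insert, Finset.mem_singleton]
    constructor
    · rintro (rfl | rfl | rfl) <;> assumption
    · exact hmem t
  · refine ⟨w4, m4, e4.trans ?_⟩
    ext t
    simp only [Finset.mem_insert, Finset.mem_singleton]
    constructor
    · rintro (rfl | rfl) <;> assumption
    · intro ht; rcases hmem t ht with rfl | rfl | rfl
      · exact Or.inl rfl
      · exact Or.inr rfl
      · exact absurd ht hc
  · refine ⟨w5, m5, e5.trans ?_⟩
    ext t
    simp only [Finset.mem_insert, Finset.mem_singleton]
    constructor
    · rintro (rfl | rfl) <;> assumption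
    · intro ht; rcases hmem t ht with rfl | rfl | rfl
      · exact Or.inl rfl
      · exact absurd ht hb
      · exact Or.inr rfl
  · refine ⟨w1, m1, e1.trans ?_⟩
    ext t
    simp only [Finset.mem_singleton]
    constructor
    · rintro rfl; assumption
    · intro ht; rcases hmem t ht with rfl | rfl | rfl
      · rfl
      · exact absurd ht hb
      · exact absurd ht hc
  · refine ⟨w6, m6, e6.trans ?_⟩
    ext t
    simp only [Finset.mem_insert, Finset.mem_singleton]
    constructor
    · rintro (rfl | rfl) <;> assumption
    · intro ht; rcases hmem t ht with rfl | rfl | rfl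
      · exact absurd ht ha
      · exact Or.inl rfl
      · exact Or.inr rfl
  · refine ⟨w2, m2, e2.trans ?_⟩
    ext t
    simp only [Finset.mem_singleton]
    constructor
    · rintro rfl; assumption
    · intro ht; rcases hmem t ht with rfl | rfl | rfl
      · exact absurd ht ha
      · rfl
      · exact absurd ht hc
  · refine ⟨w3, m3, e3.trans ?_⟩
    ext t
    simp only [Finset.mem_singleton]
    constructor
    · rintro rfl; assumption
    · intro ht; rcases hmem t ht with rfl | rfl | rfl
      · exact absurd ht ha
      · exact absurd ht hb
      · rfl
  · refine ⟨w0, m0, e0.trans ?_⟩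
    symm
    rw [Finset.eq_empty_iff_forall_notMem]
    intro t ht
    rcases hmem t ht with rfl | rfl | rfl
    · exact ha ht
    · exact hb ht
    · exact hc ht

lemma card_triple {m : ℕ} {a b c : Fin m} (hab : a ≠ b) (hac : a ≠ c) (hbc : b ≠ c) :
    ({a, b, c} : Finset (Fin m)).card = 3 := by
  rw [Finset.card_insert_of_notMem (by simp [hab, hac]),
    Finset.card_insert_of_notMem (by simp [hbc]), Finset.card_singleton]



lemma stepDown {m : ℕ} {V : Set (Finset (Fin m))} (hV : IsPC V) {S : Finset (Fin m)}
    {c : Fin m} (hc : c ∉ S) (hS : S.Nonempty) (hmem : (S ∪ {c}) ∈ V)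
    (hcV : ({c} : Finset (Fin m)) ∈ V) : ∃ a ∈ S, ((S.erase a) ∪ {c}) ∈ V := by
  obtain ⟨a0, ha0⟩ := hS
  have hne : (⟨S ∪ {c}, hmem⟩ : V) ≠ ⟨{c}, hcV⟩ := by
    intro h
    have : S ∪ {c} = {c} := congrArg Subtype.val h
    have : a0 ∈ ({c} : Finset (Fin m)) := this ▸ (Finset.mem_union_left _ ha0)
    exact hc ((Finset.mem_singleton.mp this) ▸ ha0)
  obtain ⟨w, h1, h2⟩ := pc_step hV ⟨S ∪ {c}, hmem⟩ ⟨{c}, hcV⟩ hne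
  simp only at h1 h2
  rw [hdist_union_singleton hc] at h2
  have heq : hdist (S ∪ {c}) w.1 + hdist w.1 {c} = hdist (S ∪ {c}) {c} := by
    rw [hdist_union_singleton hc]; omega
  obtain ⟨hb1, hb2⟩ := between_of_hdist heq
  rw [Finset.union_inter_cancel_right] at hb1
  rw [Finset.union_assoc, Finset.union_self] at hb2
  have hcw : c ∈ w.1 := hb1 (Finset.mem_singleton_self c)
  obtain ⟨t, ht⟩ := Finset.card_eq_one.mp h1
  have htmem : t ∈ symmDiff (S ∪ {c}) w.1 := ht ▸ Finset.mem_singleton_self t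
  rw [Finset.mem_symmDiff] at htmem
  rcases htmem with ⟨htu, htw⟩ | ⟨htw, htu⟩
  · -- t removed
    have htS : t ∈ S := by
      rcases Finset.mem_union.mp htu with h | h
      · exact h
      · exact absurd (Finset.mem_singleton.mp h ▸ hcw) htw
    refine ⟨t, htS, ?_⟩
    have hwe : w.1 = (S.erase t) ∪ {c} := by
      ext s
      simp only [Finset.mem_union, Finset.mem_erase, Finset.mem_singleton]
      constructor
      · intro hs
        have hne' : s ≠ t := fun h => htw (h ▸ hs)
        rcases Finset.mem_union.mp (hb2 hs) with h | h
        · exact Or.inl ⟨hne', h⟩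
        · exact Or.inr (Finset.mem_singleton.mp h)
      · rintro (⟨hne', hsS⟩ | rfl)
        · by_contra hsw
          have : s ∈ symmDiff (S ∪ {c}) w.1 := by
            rw [Finset.mem_symmDiff]; exact Or.inl ⟨Finset.mem_union_left _ hsS, hsw⟩
          rw [ht, Finset.mem_singleton] at this
          exact hne' this
        · exact hcw
    exact hwe ▸ w.2
  · -- t added : impossible since w ⊆ S ∪ {c}
    exact absurd (hb2 htw) htu

lemma chainDown {m : ℕ} {V : Set (Finset (Fin m))} (hV : IsPC V) {S : Finset (Fin m)}
    {c : Fin m} (hc : c ∉ S) (hS : S.Nonempty) (hmem : (S ∪ {c}) ∈ V)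
    (hcV : ({c} : Finset (Fin m)) ∈ V) : ∃ e ∈ S, ({e} : Finset (Fin m)) ∪ {c} ∈ V := by
  suffices h : ∀ k : ℕ, ∀ S : Finset (Fin m), S.card ≤ k → c ∉ S → S.Nonempty →
      (S ∪ {c}) ∈ V → ∃ e ∈ S, ({e} : Finset (Fin m)) ∪ {c} ∈ V by
    exact h S.card S le_rfl hc hS hmem
  intro k
  induction k with
  | zero =>
    intro S hk hc hS hmem
    rw [Nat.le_zero, Finset.card_eq_zero] at hk
    exact absurd (hk ▸ hS) (by simp)
  | succ k ih =>
    intro S hk hc hS hmem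
    by_cases h1 : S.card = 1
    · obtain ⟨e, rfl⟩ := Finset.card_eq_one.mp h1
      exact ⟨e, Finset.mem_singleton_self e, hmem⟩
    · obtain ⟨a, haS, hV'⟩ := stepDown hV hc hS hmem hcV
      have hcard : (S.erase a).card = S.card - 1 := Finset.card_erase_of_mem haS
      have hpos : 0 < S.card := Finset.card_pos.mpr hS
      obtain ⟨e, he, hpair⟩ := ih (S.erase a) (by omega)
        (fun h => hc (Finset.mem_of_mem_erase h))
        (Finset.card_pos.mp (by omega)) hV'
      exact ⟨e, Finset.mem_of_mem_erase he, hpair⟩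

lemma ML {m n : ℕ} {V : Set (Finset (Fin m))} {iota : Fin n → Fin m}
    (hiota : Function.Injective iota) (hV : IsPC V) (hvc : VCdimLE V 2)
    (hsub : skCopy n iota ⊆ V)
    {x : Finset (Fin m)} (hxV : x ∈ V) (hxI : x ∩ Finset.univ.image iota = ∅)
    (hmin : ∀ w ∈ V, w ∩ Finset.univ.image iota = ∅ → x.card ≤ w.card)
    {i j k : Fin n} (hij : i ≠ j) (hik : i ≠ k) (hjk : j ≠ k)
    {T : Finset (Fin m)} (hTx : T ⊆ x) (hTlt : T.card < x.card)
    {e : Fin m} (heT : e ∈ T)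
    (hpair : ({e} : Finset (Fin m)) ∪ {iota i} ∈ V)
    (hTj : (T ∪ {iota j}) ∈ V) (hyj : (x ∪ {iota j}) ∈ V) : False := by
  have hnotI : ∀ t ∈ x, ∀ a : Fin n, t ≠ iota a := by
    intro t ht a hta
    have : t ∈ x ∩ Finset.univ.image iota := Finset.mem_inter.mpr
      ⟨ht, hta ▸ Finset.mem_image_of_mem _ (Finset.mem_univ a)⟩
    rw [hxI] at this; exact absurd this (Finset.notMem_empty t)
  have hex : e ∈ x := hTx heT
  have hei : e ≠ iota i := hnotI e hex i
  have hej : e ≠ iota j := hnotI e hex j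
  have hij' : iota i ≠ iota j := fun h => hij (hiota h)
  have hix : iota i ∉ x := fun h => hnotI _ h i rfl
  have hjx : iota j ∉ x := fun h => hnotI _ h j rfl
  have hiT : iota i ∉ T := fun h => hix (hTx h)
  have hjT : iota j ∉ T := fun h => hjx (hTx h)
  -- the shattering in the "both in" case
  have hshatter : ∀ u'' : Finset (Fin m), u'' ∈ V → e ∈ u'' → iota i ∈ u'' → iota j ∈ u'' →
      False := by
    intro u'' hu''V he'' hi'' hj''
    have hk1 : iota k ∉ ({e, iota i, iota j} : Finset (Fin m)) := by
      simp only [Finset.mem_insert, Finset.mem_singleton]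
      push_neg
      exact ⟨fun h => hnotI e hex k h.symm, fun h => hik (hiota h.symm),
        fun h => hjk (hiota h.symm)⟩
    have hsh : Shatters V ({e, iota i, iota j} : Finset (Fin m)) := by
      refine shatters_of_triple hei hej hij'
        (hsub (singleton_mem_skCopy hiota k)) hxV (hsub (singleton_mem_skCopy hiota i))
        (hsub (singleton_mem_skCopy hiota j)) hpair hyj (hsub (pair_mem_skCopy hiota hij))
        hu''V ?_ ?_ ?_ ?_ ?_ ?_ ?_ ?_
      · exact Finset.singleton_inter_of_notMem hk1
      · ext t
        simp only [Finset.mem_inter, Finset.mem_insert, Finset.mem_singleton]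
        constructor
        · rintro ⟨htx, rfl | rfl | rfl⟩
          · rfl
          · exact absurd htx hix
          · exact absurd htx hjx
        · rintro rfl; exact ⟨hex, Or.inl rfl⟩
      · exact Finset.singleton_inter_of_mem (by simp)
      · exact Finset.singleton_inter_of_mem (by simp)
      · ext t
        simp only [Finset.mem_inter, Finset.mem_union, Finset.mem_insert, Finset.mem_singleton]
        constructor
        · rintro ⟨rfl | rfl, -⟩
          · exact Or.inl rfl
          · exact Or.inr rfl
        · rintro (rfl | rfl)
          · exact ⟨Or.inl rfl, Or.inl rfl⟩
          · exact ⟨Or.inr rfl, Or.inr (Or.inl rfl)⟩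
      · ext t
        simp only [Finset.mem_inter, Finset.mem_union, Finset.mem_insert, Finset.mem_singleton]
        constructor
        · rintro ⟨h, rfl | rfl | rfl⟩
          · exact Or.inl rfl
          · rcases h with h | h
            · exact absurd h hix
            · exact absurd h hij'
          · exact Or.inr rfl
        · rintro (rfl | rfl)
          · exact ⟨Or.inl hex, Or.inl rfl⟩
          · exact ⟨Or.inr rfl, Or.inr (Or.inr rfl)⟩
      · rw [Finset.inter_eq_left]
        intro t ht
        simp only [Finset.mem_insert, Finset.mem_singleton] at ht ⊢
        tauto
      · rw [Finset.inter_eq_right]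
        intro t ht
        simp only [Finset.mem_insert, Finset.mem_singleton] at ht
        rcases ht with rfl | rfl | rfl <;> assumption
    have := hvc _ hsh
    rw [card_triple hei hej hij'] at this
    omega
  -- inner induction
  suffices H : ∀ d : ℕ, ∀ u' : Finset (Fin m), u' ∈ V → e ∈ u' → iota i ∈ u' →
      iota j ∉ u' → u' ⊆ T ∪ {iota i} → hdist u' (T ∪ {iota j}) = d → False by
    refine H _ ({e} ∪ {iota i}) hpair (by simp) (by simp) ?_ ?_ rfl
    · simp only [Finset.mem_union, Finset.mem_singleton]
      push_neg
      exact ⟨fun h => hej h.symm, fun h => hij' h.symm⟩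
    · intro t ht
      simp only [Finset.mem_union, Finset.mem_singleton] at ht ⊢
      rcases ht with rfl | rfl
      · exact Or.inl heT
      · exact Or.inr rfl
  intro d
  induction d with
  | zero =>
    intro u' h1 h2 h3 h4 h5 h6
    rw [hdist_eq_zero_iff] at h6
    rw [h6] at h3
    rcases Finset.mem_union.mp h3 with h | h
    · exact hix (hTx h)
    · exact hij' (Finset.mem_singleton.mp h)
  | succ d ih =>
    intro u' h1 h2 h3 h4 h5 h6
    have hne : (⟨u', h1⟩ : V) ≠ ⟨T ∪ {iota j}, hTj⟩ := by
      intro hh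
      have : u' = T ∪ {iota j} := congrArg Subtype.val hh
      rw [this] at h3
      rcases Finset.mem_union.mp h3 with h | h
      · exact hix (hTx h)
      · exact hij' (Finset.mem_singleton.mp h)
    obtain ⟨u'', hs1, hs2⟩ := pc_step hV ⟨u', h1⟩ ⟨T ∪ {iota j}, hTj⟩ hne
    simp only at hs1 hs2
    rw [h6] at hs2
    have heq : hdist u' u''.1 + hdist u''.1 (T ∪ {iota j}) = hdist u' (T ∪ {iota j}) := by
      omega
    obtain ⟨hb1, hb2⟩ := between_of_hdist heq
    have he'' : e ∈ u''.1 := hb1 (Finset.mem_inter.mpr ⟨h2, Finset.mem_union_left _ heT⟩)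
    by_cases hi'' : iota i ∈ u''.1
    · by_cases hj'' : iota j ∈ u''.1
      · exact hshatter u''.1 u''.2 he'' hi'' hj''
      · refine ih u''.1 u''.2 he'' hi'' hj'' ?_ (by omega)
        intro t ht
        rcases Finset.mem_union.mp (hb2 ht) with h | h
        · exact h5 h
        · rcases Finset.mem_union.mp h with h' | h'
          · exact Finset.mem_union_left _ h'
          · exact absurd ((Finset.mem_singleton.mp h') ▸ ht) hj''
    · -- the step removed iota i; then iota j cannot appear
      have hj'' : iota j ∉ u''.1 := by
        intro hj''
        have hm1 : iota i ∈ symmDiff u' u''.1 := Finset.mem_symmDiff.mpr (Or.inl ⟨h3, hi''⟩)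
        have hm2 : iota j ∈ symmDiff u' u''.1 := Finset.mem_symmDiff.mpr (Or.inr ⟨hj'', h4⟩)
        have : ({iota i, iota j} : Finset (Fin m)) ⊆ symmDiff u' u''.1 := by
          intro t ht
          rcases Finset.mem_insert.mp ht with rfl | ht
          · exact hm1
          · exact (Finset.mem_singleton.mp ht) ▸ hm2
        have := Finset.card_le_card this
        rw [Finset.card_pair hij'] at this
        unfold hdist at hs1
        omega
      have hsubT : u''.1 ⊆ T := by
        intro t ht
        rcases Finset.mem_union.mp (hb2 ht) with h | h
        · rcases Finset.mem_union.mp (h5 h) with h' | h'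
          · exact h'
          · exact absurd ((Finset.mem_singleton.mp h') ▸ ht) hi''
        · rcases Finset.mem_union.mp h with h' | h'
          · exact h'
          · exact absurd ((Finset.mem_singleton.mp h') ▸ ht) hj''
      have hI'' : u''.1 ∩ Finset.univ.image iota = ∅ := by
        rw [Finset.eq_empty_iff_forall_notMem]
        intro t ht
        obtain ⟨ht1, ht2⟩ := Finset.mem_inter.mp ht
        obtain ⟨a, -, rfl⟩ := Finset.mem_image.mp ht2
        exact hnotI _ (hTx (hsubT ht1)) a rfl
      have := hmin u''.1 u''.2 hI''
      have hle : u''.1.card ≤ T.card := Finset.card_le_card hsubT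
      omega

lemma no_lone {m n : ℕ} {V : Set (Finset (Fin m))} {iota : Fin n → Fin m}
    (hiota : Function.Injective iota) (hV : IsPC V) (hsub : skCopy n iota ⊆ V)
    (hmax : ∀ (n' : ℕ) (iota' : Fin n' → Fin m), Function.Injective iota' →
      skCopy n' iota' ⊆ V → ¬ (skCopy n iota ⊂ skCopy n' iota'))
    (hempty : (∅ : Finset (Fin m)) ∉ V)
    {e : Fin m} (heI : e ∉ Finset.univ.image iota) (heV : ({e} : Finset (Fin m)) ∈ V) :
    False := by
  have hej : ∀ a : Fin n, e ≠ iota a := by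
    intro a h
    exact heI (h ▸ Finset.mem_image_of_mem _ (Finset.mem_univ a))
  -- all pairs {e, iota j} are in V
  have hpairs : ∀ j : Fin n, ({e, iota j} : Finset (Fin m)) ∈ V := by
    intro j
    have hjV : ({iota j} : Finset (Fin m)) ∈ V := hsub (singleton_mem_skCopy hiota j)
    have hne : (⟨{e}, heV⟩ : V) ≠ ⟨{iota j}, hjV⟩ := by
      intro h
      exact hej j (Finset.singleton_injective (congrArg Subtype.val h))
    obtain ⟨w, h1, h2⟩ := pc_step hV ⟨{e}, heV⟩ ⟨{iota j}, hjV⟩ hne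
    simp only at h1 h2
    rw [hdist_singletons (hej j)] at h2
    have heq : hdist {e} w.1 + hdist w.1 {iota j} = hdist {e} {iota j} := by
      rw [hdist_singletons (hej j)]; omega
    obtain ⟨-, hb2⟩ := between_of_hdist heq
    have hew : e ∈ w.1 := by
      by_contra hew
      have hwj : w.1 ⊆ {iota j} := by
        intro t ht
        rcases Finset.mem_union.mp (hb2 ht) with h | h
        · exact absurd ((Finset.mem_singleton.mp h) ▸ ht) hew
        · exact h
      rcases Finset.subset_singleton_iff.mp hwj with h | h
      · exact hempty (h ▸ w.2)
      · rw [h, hdist_eq_zero_iff.mpr rfl] at h2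
        omega
    have hjw : iota j ∈ w.1 := by
      by_contra hjw
      have hwe : w.1 ⊆ {e} := by
        intro t ht
        rcases Finset.mem_union.mp (hb2 ht) with h | h
        · exact h
        · exact absurd ((Finset.mem_singleton.mp h) ▸ ht) hjw
      rcases Finset.subset_singleton_iff.mp hwe with h | h
      · exact hempty (h ▸ w.2)
      · rw [h, hdist_eq_zero_iff.mpr rfl] at h1
        omega
    have : w.1 = {e, iota j} := by
      apply Finset.Subset.antisymm
      · intro t ht
        rcases Finset.mem_union.mp (hb2 ht) with h | h
        · exact Finset.mem_insert.mpr (Or.inl (Finset.mem_singleton.mp h))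
        · exact Finset.mem_insert.mpr (Or.inr h)
      · intro t ht
        rcases Finset.mem_insert.mp ht with rfl | ht
        · exact hew
        · exact (Finset.mem_singleton.mp ht) ▸ hjw
    exact this ▸ w.2
  -- build the larger full subdivision
  set iota' : Fin (n + 1) → Fin m := fun a => Fin.cases e iota a with hiota'def
  have hio0 : iota' 0 = e := rfl
  have hios : ∀ a : Fin n, iota' a.succ = iota a := fun a => rfl
  have hinj : Function.Injective iota' := by
    intro a b h
    rcases Fin.eq_zero_or_eq_succ a with rfl | ⟨a', rfl⟩ <;>
      rcases Fin.eq_zero_or_eq_succ b with rfl | ⟨b', rfl⟩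
    · rfl
    · rw [hio0, hios] at h; exact absurd h (hej b')
    · rw [hio0, hios] at h; exact absurd h.symm (hej a')
    · rw [hios, hios] at h; exact congrArg Fin.succ (hiota h)
  have hI' : Finset.univ.image iota' = insert e (Finset.univ.image iota) := by
    ext t
    simp only [Finset.mem_image, Finset.mem_insert, Finset.mem_univ, true_and]
    constructor
    · rintro ⟨a, rfl⟩
      rcases Fin.eq_zero_or_eq_succ a with rfl | ⟨a', rfl⟩
      · exact Or.inl rfl
      · exact Or.inr ⟨a', rfl⟩
    · rintro (rfl | ⟨a, rfl⟩)
      · exact ⟨0, rfl⟩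
      · exact ⟨a.succ, rfl⟩
  have hsub' : skCopy (n + 1) iota' ⊆ V := by
    intro y hy
    obtain ⟨hyI', hycard⟩ := (mem_skCopy_iff hinj).mp hy
    rw [hI'] at hyI'
    by_cases hey : e ∈ y
    · rcases hycard with h1 | h2
      · obtain ⟨t, rfl⟩ := Finset.card_eq_one.mp h1
        have het := Finset.mem_singleton.mp hey
        subst het
        exact heV
      · obtain ⟨s, t, hst, rfl⟩ := Finset.card_eq_two.mp h2
        rcases Finset.mem_insert.mp hey with he1 | he2
        · -- e = s
          subst he1
          have htI := hyI' (Finset.mem_insert.mpr (Or.inr (Finset.mem_singleton_self t)))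
          rcases Finset.mem_insert.mp htI with he3 | htI
          · exact absurd he3.symm hst
          · obtain ⟨a, -, rfl⟩ := Finset.mem_image.mp htI
            exact hpairs a
        · -- e = t
          have he3 := Finset.mem_singleton.mp he2
          subst he3
          have hsI := hyI' (Finset.mem_insert.mpr (Or.inl rfl))
          rcases Finset.mem_insert.mp hsI with he4 | hsI
          · exact absurd he4 hst
          · obtain ⟨a, -, rfl⟩ := Finset.mem_image.mp hsI
            rw [Finset.pair_comm]
            exact hpairs a
    · have : y ⊆ Finset.univ.image iota := by
        intro t ht
        rcases Finset.mem_insert.mp (hyI' ht) with rfl | h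
        · exact absurd ht hey
        · exact h
      exact hsub ((mem_skCopy_iff hiota).mpr ⟨this, hycard⟩)
  refine hmax (n + 1) iota' hinj hsub' ?_
  rw [Set.ssubset_def]
  constructor
  · intro y hy
    obtain ⟨hyI, hycard⟩ := (mem_skCopy_iff hiota).mp hy
    refine (mem_skCopy_iff hinj).mpr ⟨?_, hycard⟩
    rw [hI']
    exact hyI.trans (Finset.subset_insert _ _)
  · intro hcontra
    have heSK' : ({e} : Finset (Fin m)) ∈ skCopy (n + 1) iota' := by
      refine (mem_skCopy_iff hinj).mpr ⟨?_, Or.inl (Finset.card_singleton e)⟩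
      rw [hI']
      exact Finset.singleton_subset_iff.mpr (Finset.mem_insert_self _ _)
    have := (mem_skCopy_iff hiota).mp (hcontra heSK')
    exact heI (Finset.singleton_subset_iff.mp this.1)

lemma key_lemma {m n : ℕ} (hn : 4 ≤ n) {V : Set (Finset (Fin m))} {iota : Fin n → Fin m}
    (hiota : Function.Injective iota) (hV : IsPC V) (hvc : VCdimLE V 2)
    (hsub : skCopy n iota ⊆ V) (hconv : IsConvexIn V (skCopy n iota))
    (hmax : ∀ (n' : ℕ) (iota' : Fin n' → Fin m), Function.Injective iota' →
      skCopy n' iota' ⊆ V → ¬ (skCopy n iota ⊂ skCopy n' iota')) :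
    ∀ x ∈ V, (x ∩ Finset.univ.image iota).Nonempty := by
  set I := Finset.univ.image iota with hI
  have i0 : Fin n := ⟨0, by omega⟩
  -- indices
  let j0 : Fin n := ⟨0, by omega⟩
  let j1 : Fin n := ⟨1, by omega⟩
  let j2 : Fin n := ⟨2, by omega⟩
  have hj01 : j0 ≠ j1 := by simp [j0, j1, Fin.ext_iff]
  have hj02 : j0 ≠ j2 := by simp [j0, j2, Fin.ext_iff]
  have hj12 : j1 ≠ j2 := by simp [j1, j2, Fin.ext_iff]
  -- the empty set is not a vertex
  have hempty : (∅ : Finset (Fin m)) ∉ V := by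
    intro h0
    have h01 : iota j0 ≠ iota j1 := fun h => hj01 (hiota h)
    have heq : hdist {iota j0} (∅ : Finset (Fin m)) + hdist ∅ {iota j1}
        = hdist {iota j0} {iota j1} := by
      rw [hdist_empty, hdist_comm, hdist_empty, hdist_singletons h01]
      simp
    have hmem := hconv.2 _ (singleton_mem_skCopy hiota j0) _ (singleton_mem_skCopy hiota j1)
      _ h0 heq
    obtain ⟨-, hcard⟩ := (mem_skCopy_iff hiota).mp hmem
    simp at hcard
  -- main argument
  have main : ¬ ∃ x, x ∈ V ∧ x ∩ I = ∅ := by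
    rintro ⟨x0, hx0V, hx0I⟩
    set C := {c : ℕ | ∃ x, x ∈ V ∧ x ∩ I = ∅ ∧ x.card = c} with hC
    have hCne : C.Nonempty := ⟨x0.card, x0, hx0V, hx0I, rfl⟩
    obtain ⟨x, hxV, hxI, hxc⟩ := Nat.sInf_mem hCne
    have hmin : ∀ w ∈ V, w ∩ I = ∅ → x.card ≤ w.card := by
      intro w hw hwI
      rw [hxc]
      exact Nat.sInf_le ⟨w, hw, hwI, rfl⟩
    have hnotI : ∀ t ∈ x, ∀ a : Fin n, t ≠ iota a := by
      intro t ht a hta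
      have : t ∈ x ∩ I := Finset.mem_inter.mpr
        ⟨ht, hta ▸ Finset.mem_image_of_mem _ (Finset.mem_univ a)⟩
      rw [hxI] at this
      exact absurd this (Finset.notMem_empty t)
    rcases Nat.lt_or_ge x.card 2 with h2 | h2
    · -- small cases
      rcases Nat.lt_or_ge x.card 1 with h1 | h1
      · rw [Nat.lt_one_iff, Finset.card_eq_zero] at h1
        exact hempty (h1 ▸ hxV)
      · have h1' : x.card = 1 := by omega
        obtain ⟨e, rfl⟩ := Finset.card_eq_one.mp h1'
        have heI : e ∉ I := by
          intro h
          obtain ⟨a, -, rfl⟩ := Finset.mem_image.mp h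
          exact hnotI _ (Finset.mem_singleton_self _) a rfl
        exact no_lone hiota hV hsub hmax hempty heI hxV
    · -- main case : x.card ≥ 2
      have hjx : ∀ j : Fin n, iota j ∉ x := fun j h => hnotI _ h j rfl
      have hxne : x.Nonempty := Finset.card_pos.mp (by omega)
      have hyV : ∀ j : Fin n, (x ∪ {iota j}) ∈ V := by
        intro j
        have hjV : ({iota j} : Finset (Fin m)) ∈ V := hsub (singleton_mem_skCopy hiota j)
        have hne : (⟨x, hxV⟩ : V) ≠ ⟨{iota j}, hjV⟩ := by
          intro h
          have hx' : x = {iota j} := congrArg Subtype.val h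
          exact hjx j (hx' ▸ Finset.mem_singleton_self _)
        obtain ⟨w, h1, h2⟩ := pc_step hV ⟨x, hxV⟩ ⟨{iota j}, hjV⟩ hne
        simp only at h1 h2
        rw [hdist_add_singleton (hjx j)] at h2
        have heq : hdist x w.1 + hdist w.1 {iota j} = hdist x {iota j} := by
          rw [hdist_add_singleton (hjx j)]; omega
        obtain ⟨hb1, hb2⟩ := between_of_hdist heq
        obtain ⟨t, ht⟩ := Finset.card_eq_one.mp h1
        have htmem : t ∈ symmDiff x w.1 := ht ▸ Finset.mem_singleton_self t
        rw [Finset.mem_symmDiff] at htmem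
        rcases htmem with ⟨htx, htw⟩ | ⟨htw, htx⟩
        · -- t removed from x : contradiction with minimality
          have hwsubx : w.1 ⊆ x := by
            intro s hs
            rcases Finset.mem_union.mp (hb2 hs) with h | h
            · exact h
            · exfalso
              have hsj : s = iota j := Finset.mem_singleton.mp h
              have : s ∈ symmDiff x w.1 := Finset.mem_symmDiff.mpr
                (Or.inr ⟨hs, hsj ▸ hjx j⟩)
              rw [ht, Finset.mem_singleton] at this
              exact (hjx j) ((this ▸ hsj) ▸ htx)
          exfalso
          have hwI : w.1 ∩ I = ∅ := by
            rw [Finset.eq_empty_iff_forall_notMem]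
            intro s hs
            obtain ⟨hs1, hs2⟩ := Finset.mem_inter.mp hs
            obtain ⟨a, -, rfl⟩ := Finset.mem_image.mp hs2
            exact hnotI _ (hwsubx hs1) a rfl
          have hlt : w.1.card < x.card := Finset.card_lt_card ⟨hwsubx, fun hss => htw (hss htx)⟩
          have := hmin w.1 w.2 hwI
          omega
        · -- t = iota j added
          have htj : t = iota j := by
            rcases Finset.mem_union.mp (hb2 htw) with h | h
            · exact absurd h htx
            · exact Finset.mem_singleton.mp h
          have hwe : w.1 = x ∪ {iota j} := by
            ext s
            simp only [Finset.mem_union, Finset.mem_singleton]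
            constructor
            · intro hs
              rcases Finset.mem_union.mp (hb2 hs) with h | h
              · exact Or.inl h
              · exact Or.inr (Finset.mem_singleton.mp h)
            · rintro (hs | rfl)
              · by_contra hsw
                have : s ∈ symmDiff x w.1 := Finset.mem_symmDiff.mpr (Or.inl ⟨hs, hsw⟩)
                rw [ht, Finset.mem_singleton] at this
                subst this
                exact (htj ▸ hjx j) hs
              · exact htj ▸ htw
          exact hwe ▸ w.2
      -- for each j pick the first-removed element ℓ and a chain bottom e
      have hLE : ∀ j : Fin n, ∃ l ∈ x, ∃ e ∈ x.erase l,
          ((x.erase l) ∪ {iota j}) ∈ V ∧ ({e} : Finset (Fin m)) ∪ {iota j} ∈ V := by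
        intro j
        obtain ⟨l, hlx, hlV⟩ := stepDown hV (hjx j) hxne (hyV j)
          (hsub (singleton_mem_skCopy hiota j))
        have hcard : (x.erase l).card = x.card - 1 := Finset.card_erase_of_mem hlx
        obtain ⟨e, hee, heV⟩ := chainDown hV
          (fun h => (hjx j) (Finset.mem_of_mem_erase h))
          (Finset.card_pos.mp (by omega)) hlV (hsub (singleton_mem_skCopy hiota j))
        exact ⟨l, hlx, e, hee, hlV, heV⟩
      obtain ⟨l0, hl0x, e0, he0, hT0, hp0⟩ := hLE j0
      obtain ⟨l1, hl1x, e1, he1, hT1, hp1⟩ := hLE j1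
      obtain ⟨l2, hl2x, e2, he2, hT2, hp2⟩ := hLE j2
      have herase : ∀ l ∈ x, (x.erase l) ⊆ x ∧ (x.erase l).card < x.card := by
        intro l hl
        refine ⟨Finset.erase_subset _ _, ?_⟩
        rw [Finset.card_erase_of_mem hl]
        have : 0 < x.card := Finset.card_pos.mpr hxne
        omega
      -- ML applications
      have hML : ∀ (i j k : Fin n), i ≠ j → i ≠ k → j ≠ k → ∀ l ∈ x, ∀ e' ∈ x.erase l,
          (({e'} : Finset (Fin m)) ∪ {iota i}) ∈ V → ((x.erase l) ∪ {iota j}) ∈ V → False :=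
        fun i j k hij hik hjk l hl e' he' hp hT =>
          ML hiota hV hvc hsub hxV hxI hmin hij hik hjk (herase l hl).1 (herase l hl).2
            he' hp hT (hyV j)
      -- e0 = l2 and e1 = l2, so e0 = e1
      have he0l2 : e0 = l2 := by
        by_contra hne
        exact hML j0 j2 j1 hj02 hj01 (Ne.symm hj12) l2 hl2x e0
          (Finset.mem_erase.mpr ⟨hne, Finset.mem_of_mem_erase he0⟩) hp0 hT2
      have he1l2 : e1 = l2 := by
        by_contra hne
        exact hML j1 j2 j0 hj12 (Ne.symm hj01) (Ne.symm hj02) l2 hl2x e1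
          (Finset.mem_erase.mpr ⟨hne, Finset.mem_of_mem_erase he1⟩) hp1 hT2
      -- e1 = l0
      have he1l0 : e1 = l0 := by
        by_contra hne
        exact hML j1 j0 j2 (Ne.symm hj01) hj12 hj02 l0 hl0x e1
          (Finset.mem_erase.mpr ⟨hne, Finset.mem_of_mem_erase he1⟩) hp1 hT0
      -- but e0 ∈ x.erase l0 means e0 ≠ l0
      have : e0 ≠ l0 := (Finset.mem_erase.mp he0).1
      rw [he0l2, ← he1l2, he1l0] at this
      exact this rfl
  intro x hx
  by_contra hne
  exact main ⟨x, hx, Finset.not_nonempty_iff_eq_empty.mp hne⟩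


/-- A convex `SK_n` (`n ≥ 4`) in a two-dimensional partial cube which is not
contained in a larger full subdivision is gated. -/
theorem stmt11 (m n : ℕ) (hn : 4 ≤ n) (V : Set (Finset (Fin m)))
    (iota : Fin n → Fin m) (hiota : Function.Injective iota)
    (hV : IsPC V) (hvc : VCdimLE V 2)
    (hsub : skCopy n iota ⊆ V) (hconv : IsConvexIn V (skCopy n iota))
    (hmax : ∀ (n' : ℕ) (iota' : Fin n' → Fin m), Function.Injective iota' →
      skCopy n' iota' ⊆ V → ¬ (skCopy n iota ⊂ skCopy n' iota')) :
    IsGatedIn V (skCopy n iota) := by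
  refine ⟨hsub, ?_⟩
  intro x hxV
  set I := Finset.univ.image iota with hI
  have hne : (x ∩ I).Nonempty := key_lemma hn hiota hV hvc hsub hconv hmax x hxV
  have hcard2 : (x ∩ I).card ≤ 2 := by
    by_contra hcon
    push_neg at hcon
    obtain ⟨Y, hYsub, hY3⟩ := Finset.exists_subset_card_eq (show 3 ≤ (x ∩ I).card by omega)
    obtain ⟨a, b, c, hab, hac, hbc, rfl⟩ := Finset.card_eq_three.mp hY3
    have hYI : ({a, b, c} : Finset (Fin m)) ⊆ I := hYsub.trans Finset.inter_subset_right
    have hYx : ({a, b, c} : Finset (Fin m)) ⊆ x := hYsub.trans Finset.inter_subset_left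
    have haI : a ∈ I := hYI (by simp)
    have hbI : b ∈ I := hYI (by simp)
    have hcI : c ∈ I := hYI (by simp)
    -- a fourth element of I outside {a,b,c}
    have hcardI : I.card = n := by
      rw [hI, Finset.card_image_of_injective _ hiota, Finset.card_univ, Fintype.card_fin]
    have hsd : (I \ ({a, b, c} : Finset (Fin m))).Nonempty := by
      rw [← Finset.card_pos, Finset.card_sdiff_of_subset hYI, hY3, hcardI]
      omega
    obtain ⟨t, ht⟩ := hsd
    obtain ⟨htI, htY⟩ := Finset.mem_sdiff.mp ht
    have hmemsk : ∀ s : Finset (Fin m), s ⊆ I → (s.card = 1 ∨ s.card = 2) → s ∈ V :=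
      fun s h1 h2 => hsub ((mem_skCopy_iff hiota).mpr ⟨h1, h2⟩)
    have hsh : Shatters V ({a, b, c} : Finset (Fin m)) := by
      refine shatters_of_triple hab hac hbc
        (hmemsk {t} (Finset.singleton_subset_iff.mpr htI) (Or.inl (Finset.card_singleton t)))
        (hmemsk {a} (Finset.singleton_subset_iff.mpr haI) (Or.inl (Finset.card_singleton a)))
        (hmemsk {b} (Finset.singleton_subset_iff.mpr hbI) (Or.inl (Finset.card_singleton b)))
        (hmemsk {c} (Finset.singleton_subset_iff.mpr hcI) (Or.inl (Finset.card_singleton c)))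
        (hmemsk {a, b} (Finset.insert_subset haI (Finset.singleton_subset_iff.mpr hbI))
          (Or.inr (Finset.card_pair hab)))
        (hmemsk {a, c} (Finset.insert_subset haI (Finset.singleton_subset_iff.mpr hcI))
          (Or.inr (Finset.card_pair hac)))
        (hmemsk {b, c} (Finset.insert_subset hbI (Finset.singleton_subset_iff.mpr hcI))
          (Or.inr (Finset.card_pair hbc)))
        hxV ?_ ?_ ?_ ?_ ?_ ?_ ?_ ?_
      · exact Finset.singleton_inter_of_notMem htY
      · exact Finset.singleton_inter_of_mem (by simp)
      · exact Finset.singleton_inter_of_mem (by simp)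
      · exact Finset.singleton_inter_of_mem (by simp)
      · rw [Finset.inter_eq_left]
        intro s hs
        simp only [Finset.mem_insert, Finset.mem_singleton] at hs ⊢
        tauto
      · rw [Finset.inter_eq_left]
        intro s hs
        simp only [Finset.mem_insert, Finset.mem_singleton] at hs ⊢
        tauto
      · rw [Finset.inter_eq_left]
        intro s hs
        simp only [Finset.mem_insert, Finset.mem_singleton] at hs ⊢
        tauto
      · rw [Finset.inter_eq_right]
        exact hYx
    have := hvc _ hsh
    rw [card_triple hab hac hbc] at this
    omega
  have hgmem : (x ∩ I) ∈ skCopy n iota := by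
    refine (mem_skCopy_iff hiota).mpr ⟨Finset.inter_subset_right, ?_⟩
    have := Finset.card_pos.mpr hne
    omega
  refine ⟨x ∩ I, hgmem, ?_⟩
  intro y hy
  obtain ⟨hyI, -⟩ := (mem_skCopy_iff hiota).mp hy
  refine between_hdist ?_ ?_
  · exact Finset.inter_subset_inter (le_refl x) hyI
  · exact Finset.inter_subset_left.trans Finset.subset_union_left
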